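/- Let R be a commutative ring with unity and M an R-module. If (f_1, ..., f_t) ∈ R^t is an M-regular sequence, then for every integer n > 0 the sequence (f_1^n, ..., f_t^n) is also an M-regular sequence. -/

import Mathlib

open RingTheory.Sequence Submodule Function

open scoped Pointwise

section Aux

lemma mem_smul_top_iff_exists {R : Type*} [CommRing R] {M : Type*} [AddCommGroup M]
    [Module R M] (r : R) (x : M) :
    x ∈ (r • ⊤ : Submodule R M) ↔ ∃ y : M, r • y = x := by
  rw [← SetLike.mem_coe, Submodule.coe_pointwise_smul]
  constructor
  · rintro ⟨y, -, rfl⟩; exact ⟨y, rfl⟩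
  · rintro ⟨y, rfl⟩; exact ⟨y, trivial, rfl⟩


variable {R : Type*} [CommRing R]

/-- If a sequence is weakly regular on the outer terms of a short exact sequence,
it is weakly regular on the middle term. -/
lemma isWeaklyRegular_of_exact
    {A B C : Type*} [AddCommGroup A] [Module R A] [AddCommGroup B] [Module R B]
    [AddCommGroup C] [Module R C]
    (rs : List R) (f : A →ₗ[R] B) (g : B →ₗ[R] C)
    (hf : Function.Injective f) (hfg : Function.Exact f g) (hg : Function.Surjective g)
    (hA : IsWeaklyRegular A rs) (hC : IsWeaklyRegular C rs) :
    IsWeaklyRegular B rs := by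
  induction rs generalizing A B C with
  | nil => exact .nil R B
  | cons r rs ih =>
    rw [isWeaklyRegular_cons_iff] at hA hC ⊢
    obtain ⟨hA1, hA2⟩ := hA
    obtain ⟨hC1, hC2⟩ := hC
    have hB1 : IsSMulRegular B r :=
      isSMulRegular_of_range_eq_ker hf hfg.linearMap_ker_eq.symm hA1 hC1
    refine ⟨hB1, ?_⟩
    have hg' : Function.Surjective (QuotSMulTop.map r g) :=
      QuotSMulTop.map_surjective r hg
    have hfg' : Function.Exact (QuotSMulTop.map r f) (QuotSMulTop.map r g) :=
      QuotSMulTop.map_exact r hfg hg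
    have hf' : Function.Injective (QuotSMulTop.map r f) := by
      rw [← LinearMap.ker_eq_bot, eq_bot_iff]
      rintro x hx
      obtain ⟨a, rfl⟩ := Submodule.Quotient.mk_surjective _ x
      have : QuotSMulTop.map r f (Submodule.Quotient.mk a)
          = (Submodule.Quotient.mk (f a) : QuotSMulTop r B) := rfl
      rw [LinearMap.mem_ker, this, Submodule.Quotient.mk_eq_zero] at hx
      obtain ⟨b, hb⟩ := (mem_smul_top_iff_exists _ _).mp hx
      -- f a = r • b; g b is killed by r, hence g b = 0, hence b ∈ range f
      have hgb : r • g b = 0 := by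
        rw [← map_smul, hb, hfg.apply_apply_eq_zero]
      have : g b = 0 := hC1 (by simp only [hgb, smul_zero])
      obtain ⟨a', ha'⟩ := (hfg b).mp this
      have : f a = f (r • a') := by rw [map_smul, ha', hb]
      have ha : a = r • a' := hf this
      rw [mem_bot, Submodule.Quotient.mk_eq_zero, ha]
      exact smul_mem_pointwise_smul _ _ _ mem_top
    exact ih _ _ hf' hfg' hg' hA2 hC2

variable {M : Type*} [AddCommGroup M] [Module R M]

/-- If `r` is regular on `M` and `rs` is weakly regular on `M/rM`, then `rs` is
weakly regular on `M/rⁿM` for all `n ≥ 1`. -/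
lemma isWeaklyRegular_quot_pow_smul_top {r : R} {rs : List R}
    (h1 : IsSMulRegular M r) (h2 : IsWeaklyRegular (QuotSMulTop r M) rs) :
    ∀ n : ℕ, 0 < n → IsWeaklyRegular (M ⧸ (r ^ n • ⊤ : Submodule R M)) rs := by
  intro n hn
  induction n with
  | zero => exact absurd hn (lt_irrefl 0)
  | succ n ih =>
    rcases Nat.eq_zero_or_pos n with rfl | hn'
    · have e : (r ^ 1 • ⊤ : Submodule R M) = r • ⊤ := by rw [pow_one]
      exact ((Submodule.quotEquivOfEq _ _ e).isWeaklyRegular_congr rs).mpr h2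
    · -- short exact sequence 0 → M/rⁿM → M/rⁿ⁺¹M → M/rM → 0
      have hle : (r ^ (n + 1) • ⊤ : Submodule R M) ≤ r • ⊤ := by
        rintro x hx
        obtain ⟨y, rfl⟩ := (mem_smul_top_iff_exists _ _).mp hx
        rw [pow_succ, mul_comm, mul_smul]
        exact smul_mem_pointwise_smul _ _ _ mem_top
      have hsm : (r ^ n • ⊤ : Submodule R M)
          ≤ (r ^ (n + 1) • ⊤ : Submodule R M).comap (LinearMap.lsmul R M r) := by
        rintro x hx
        obtain ⟨y, rfl⟩ := (mem_smul_top_iff_exists _ _).mp hx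
        simp only [Submodule.mem_comap, LinearMap.lsmul_apply]
        rw [smul_smul, ← pow_succ']
        exact smul_mem_pointwise_smul _ _ _ mem_top
      set f : (M ⧸ (r ^ n • ⊤ : Submodule R M)) →ₗ[R]
          (M ⧸ (r ^ (n + 1) • ⊤ : Submodule R M)) :=
        Submodule.mapQ _ _ (LinearMap.lsmul R M r) hsm with hfdef
      set g : (M ⧸ (r ^ (n + 1) • ⊤ : Submodule R M)) →ₗ[R] QuotSMulTop r M :=
        Submodule.mapQ _ _ LinearMap.id hle with hgdef
      have hf : Function.Injective f := by
        rw [← LinearMap.ker_eq_bot, eq_bot_iff]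
        rintro x hx
        obtain ⟨a, rfl⟩ := Submodule.Quotient.mk_surjective _ x
        have : f (Submodule.Quotient.mk a) = Submodule.Quotient.mk (r • a) := rfl
        rw [LinearMap.mem_ker, this, Submodule.Quotient.mk_eq_zero] at hx
        obtain ⟨y, hy⟩ := (mem_smul_top_iff_exists _ _).mp hx
        rw [pow_succ, mul_comm, mul_smul] at hy
        have ha : a = r ^ n • y := h1 hy.symm
        rw [mem_bot, Submodule.Quotient.mk_eq_zero, ha]
        exact smul_mem_pointwise_smul _ _ _ mem_top
      have hg : Function.Surjective g := by
        rintro x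
        obtain ⟨a, rfl⟩ := Submodule.Quotient.mk_surjective _ x
        exact ⟨Submodule.Quotient.mk a, rfl⟩
      have hfg : Function.Exact f g := by
        rintro x
        obtain ⟨a, rfl⟩ := Submodule.Quotient.mk_surjective _ x
        constructor
        · intro hx
          have : g (Submodule.Quotient.mk a) = (Submodule.Quotient.mk a : QuotSMulTop r M) := rfl
          rw [this, Submodule.Quotient.mk_eq_zero] at hx
          obtain ⟨y, rfl⟩ := (mem_smul_top_iff_exists _ _).mp hx
          exact ⟨Submodule.Quotient.mk y, rfl⟩
        · rintro ⟨b, hb⟩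
          obtain ⟨c, rfl⟩ := Submodule.Quotient.mk_surjective _ b
          rw [← hb]
          show (Submodule.Quotient.mk (r • c) : QuotSMulTop r M) = 0
          rw [Submodule.Quotient.mk_eq_zero]
          exact smul_mem_pointwise_smul _ _ _ mem_top
      exact isWeaklyRegular_of_exact rs f g hf hfg hg (ih hn') h2

lemma isWeaklyRegular_pow {rs : List R}
    (h : IsWeaklyRegular M rs) (n : ℕ) (hn : 0 < n) :
    IsWeaklyRegular M (rs.map (· ^ n)) := by
  induction rs generalizing M with
  | nil => exact .nil R M
  | cons r rs ih =>
    rw [isWeaklyRegular_cons_iff] at h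
    obtain ⟨h1, h2⟩ := h
    rw [List.map_cons, isWeaklyRegular_cons_iff]
    exact ⟨h1.pow n, ih (isWeaklyRegular_quot_pow_smul_top h1 h2 n hn)⟩

end Aux

/-- Let `R` be a commutative ring with unity and `M` an `R`-module.
If `(f₁, …, f_t)` is an `M`-regular sequence, then for every `n > 0` the sequence
`(f₁ⁿ, …, f_tⁿ)` is also an `M`-regular sequence. -/
theorem power_of_regular_sequence_is_regular
    {R M : Type*} [CommRing R] [AddCommGroup M] [Module R M]
    (rs : List R) (h : RingTheory.Sequence.IsRegular M rs) (n : ℕ) (hn : 0 < n) :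
    RingTheory.Sequence.IsRegular M (rs.map (· ^ n)) := by
  rw [RingTheory.Sequence.isRegular_iff] at h ⊢
  obtain ⟨hw, hne⟩ := h
  refine ⟨isWeaklyRegular_pow hw n hn, ?_⟩
  intro htop
  apply hne
  have hle : Ideal.ofList (rs.map (· ^ n)) ≤ Ideal.ofList rs := by
    rw [Ideal.span_le]
    intro x hx
    rw [Set.mem_setOf_eq, List.mem_map] at hx
    obtain ⟨r, hr, rfl⟩ := hx
    have hmem : r ∈ Ideal.ofList rs := Ideal.subset_span hr
    simpa using Ideal.pow_mem_of_mem _ hmem n hn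
  refine top_le_iff.mp ?_ |>.symm
  calc (⊤ : Submodule R M) = Ideal.ofList (rs.map (· ^ n)) • ⊤ := htop
    _ ≤ Ideal.ofList rs • ⊤ := Submodule.smul_mono_left hle
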